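/- arXiv:1507.02132 — 2 statements merged into one kernel-verified Lean document; each statement's English description precedes it below -/
import Mathlib

section
/- For a partition-preferred congestion function under identical pricing, the equilibrium cut-off user does not decrease after partitioning: let K be increasing in Q with K(Q,C) ≥ K(αQ, αC) for all 0 ≤ α < 1; let the single-class equilibrium satisfy θ̃ = (V−p)/K(Q̃,C) with Q̃ = F(θ̃), and the two-class equilibrium (with C₁+C₂ = C, β = C₁/C ≥ 1/2) satisfy K(Q₁,C₁) = K(Q₂,C₂), θ₁ = (V−p)/K(Q₁,C₁), Q₁ = F(θ₁)−F(θ₂), Q₂ = F(θ₂) for an increasing cumulative distribution F. Then θ₁ ≥ θ̃. -/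
theorem partition_cutoff_not_decreased
    (K : ℝ → ℝ → ℝ) (F : ℝ → ℝ)
    (hKpos : ∀ Q C : ℝ, 0 ≤ Q → 0 < C → 0 < K Q C)
    (hKmono : ∀ C Q Q' : ℝ, 0 < C → 0 ≤ Q → Q < Q' → K Q C < K Q' C)
    (hPart : ∀ Q C α : ℝ, 0 ≤ Q → 0 < C → 0 ≤ α → α < 1 →
      K Q C ≥ K (α * Q) (α * C))
    (hF : StrictMono F) (hFnn : ∀ θ, 0 ≤ F θ)
    (V p C : ℝ) (hV : p < V) (hp : 0 ≤ p) (hC : 0 < C)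
    (θtilde θ₁ θ₂ C₁ C₂ : ℝ)
    (hC₁ : 0 < C₁) (hC₂ : 0 < C₂) (hCsum : C₁ + C₂ = C) (hC₁₂ : C₂ ≤ C₁)
    (hθ : θ₂ < θ₁) (hθ₂ : 0 ≤ θ₂)
    (hsingle : θtilde = (V - p) / K (F θtilde) C)
    (hKeq : K (F θ₁ - F θ₂) C₁ = K (F θ₂) C₂)
    (htwo : θ₁ = (V - p) / K (F θ₁ - F θ₂) C₁) :
    θ₁ ≥ θtilde := by
  by_contra h
  push_neg at h
  set Q1 := F θ₁ - F θ₂ with hQ1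
  set Q2 := F θ₂ with hQ2
  have hF12 : F θ₂ < F θ₁ := hF hθ
  have hQ1nn : 0 ≤ Q1 := by simp [hQ1]; linarith
  have hQ2nn : 0 ≤ Q2 := hFnn θ₂
  have hQs : Q1 + Q2 = F θ₁ := by ring
  have hFnn1 : 0 ≤ F θ₁ := hFnn θ₁
  have hK1pos : 0 < K Q1 C₁ := hKpos _ _ hQ1nn hC₁
  have hα1 : C₁ / C < 1 := by
    rw [div_lt_one hC]; linarith
  have hα2 : C₂ / C < 1 := by
    rw [div_lt_one hC]; linarith
  have hα1nn : 0 ≤ C₁ / C := le_of_lt (div_pos hC₁ hC)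
  have hα2nn : 0 ≤ C₂ / C := le_of_lt (div_pos hC₂ hC)
  have hc1 : C₁ / C * C = C₁ := div_mul_cancel₀ _ (ne_of_gt hC)
  have hc2 : C₂ / C * C = C₂ := div_mul_cancel₀ _ (ne_of_gt hC)
  -- key: K Q1 C₁ ≤ K (F θ₁) C
  have hkey : K Q1 C₁ ≤ K (F θ₁) C := by
    by_cases hc : Q1 ≤ C₁ / C * F θ₁
    · have h1 : K Q1 C₁ ≤ K (C₁ / C * F θ₁) C₁ := by
        rcases lt_or_eq_of_le hc with h' | h'
        · exact le_of_lt (hKmono C₁ _ _ hC₁ hQ1nn h')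
        · rw [h']
      have h2 : K (C₁ / C * F θ₁) (C₁ / C * C) ≤ K (F θ₁) C :=
        hPart (F θ₁) C (C₁ / C) hFnn1 hC hα1nn hα1
      rw [hc1] at h2
      linarith
    · push_neg at hc
      have hc' : Q2 < C₂ / C * F θ₁ := by
        have : C₁ / C * F θ₁ + C₂ / C * F θ₁ = F θ₁ := by
          rw [div_mul_eq_mul_div, div_mul_eq_mul_div, ← add_div,
            ← add_mul, hCsum, mul_div_assoc]
          field_simp
        linarith
      have h1 : K Q2 C₂ ≤ K (C₂ / C * F θ₁) C₂ :=
        le_of_lt (hKmono C₂ _ _ hC₂ hQ2nn hc')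
      have h2 : K (C₂ / C * F θ₁) (C₂ / C * C) ≤ K (F θ₁) C :=
        hPart (F θ₁) C (C₂ / C) hFnn1 hC hα2nn hα2
      rw [hc2] at h2
      rw [hKeq]
      linarith
  have hlt : K Q1 C₁ < K (F θtilde) C :=
    lt_of_le_of_lt hkey (hKmono C _ _ hC hFnn1 (hF h))
  have hVp : 0 < V - p := by linarith
  have : θtilde < θ₁ := by
    rw [hsingle, htwo]
    exact div_lt_div_of_pos_left hVp hK1pos hlt
  linarith
end

section
/- Key lemma in the proof of viability of partitioning: if the congestion function K is strictly increasing in Q and satisfies K(Q₁,C₁) = K(Q₂,C₂) where C₁ = βC, C₂ = (1−β)C with 1/2 ≤ β < 1, and K(Q,C) ≥ K(αQ, αC) for all 0 ≤ α < 1, then Q₂ ≥ ((1−β)/β)·Q₁, and consequently Q₁ + Q₂ ≥ Q₁/β. -/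
theorem partition_usage_bound
    (K : ℝ → ℝ → ℝ)
    (hKmono : ∀ C Q Q' : ℝ, 0 < C → 0 ≤ Q → Q < Q' → K Q C < K Q' C)
    (hPart : ∀ Q C α : ℝ, 0 ≤ Q → 0 < C → 0 ≤ α → α < 1 →
      K Q C ≥ K (α * Q) (α * C))
    (C β Q₁ Q₂ : ℝ) (hC : 0 < C) (hβ1 : 1 / 2 ≤ β) (hβ2 : β < 1)
    (hQ₁ : 0 ≤ Q₁) (hQ₂ : 0 ≤ Q₂)
    (hKeq : K Q₁ (β * C) = K Q₂ ((1 - β) * C)) :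
    Q₂ ≥ ((1 - β) / β) * Q₁ ∧ Q₁ + Q₂ ≥ Q₁ / β := by
  have hβpos : 0 < β := by linarith
  have hmain : Q₂ ≥ ((1 - β) / β) * Q₁ := by
    rcases eq_or_lt_of_le hβ1 with h | h
    · -- β = 1/2
      have hb : (1 : ℝ) - β = β := by linarith
      rw [hb] at hKeq
      have hC1 : 0 < β * C := by positivity
      have hQeq : Q₁ = Q₂ := by
        by_contra hne
        rcases lt_or_gt_of_ne hne with hlt | hgt
        · exact absurd hKeq (ne_of_lt (hKmono (β * C) Q₁ Q₂ hC1 hQ₁ hlt))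
        · exact absurd hKeq.symm (ne_of_lt (hKmono (β * C) Q₂ Q₁ hC1 hQ₂ hgt))
      rw [hb, div_self (ne_of_gt hβpos), one_mul]
      linarith
    · -- β > 1/2
      set α := (1 - β) / β with hα
      have hα0 : 0 ≤ α := by apply div_nonneg <;> linarith
      have hα1 : α < 1 := by rw [hα, div_lt_one hβpos]; linarith
      have hαC : α * (β * C) = (1 - β) * C := by
        rw [hα]; field_simp
      have h1 := hPart Q₁ (β * C) α hQ₁ (by positivity) hα0 hα1
      rw [hαC] at h1
      by_contra hcon
      push_neg at hcon
      have hC2 : 0 < (1 - β) * C := by nlinarith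
      have h2 := hKmono ((1 - β) * C) Q₂ (α * Q₁) hC2 hQ₂ hcon
      rw [← hKeq] at h2
      linarith
  refine ⟨hmain, ?_⟩
  have : Q₁ / β = Q₁ + ((1 - β) / β) * Q₁ := by field_simp; ring
  linarith
end
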